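/- If h is a heap and h₁ ⊑ h, h₂ ⊑ h with h₁ in the unary interpretation of φ₁ and h₂ in the unary interpretation of φ₂, and the implication φ₁ * a ∧ φ₂ * a * b ⟹ (ψ₁ * a * b) ∨ ψ₂ is valid in the unary interpretation for all upward-closed instantiations of the assertion variables a, b, then h₂ ∈ ⟦ψ₁⟧ or h ∈ ⟦ψ₂⟧. (Unary consequence of Balloon-Lift, Example 3.6.) -/

import Mathlib

/-- A heap: a finite partial function from positive integers to integers. -/
abbrev Heap : Type := Finmap (fun _ : ℕ+ => ℤ)

/-- Heap extension order: `hle f h` means `h` extends `f`. -/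
def hle (f h : Heap) : Prop := ∀ (x : ℕ+) (v : ℤ), f.lookup x = some v → h.lookup x = some v

/-- Upward-closed sets of heaps. -/
def UpClosed (p : Set Heap) : Prop := ∀ ⦃f h : Heap⦄, f ∈ p → hle f h → h ∈ p

/-- Separating conjunction of sets of heaps. -/
def sep (p q : Set Heap) : Set Heap :=
  { h | ∃ f g : Heap, f ∈ p ∧ g ∈ q ∧ f.Disjoint g ∧ h = f ∪ g }

/-- Upward closure of a set of heaps. -/
def up (p : Set Heap) : Set Heap := { h | ∃ f ∈ p, hle f h }

/-- The diagonal map `Δ_n`. -/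
def Delta (n : ℕ) (p : Set Heap) : Set (Fin n → Heap) :=
  { h | ∃ f ∈ p, ∀ i, hle f (h i) }

/-- Componentwise extension order on `n`-tuples of heaps. -/
def hleN {n : ℕ} (f g : Fin n → Heap) : Prop := ∀ i, hle (f i) (g i)

/-- Componentwise upward-closed `n`-ary heap relations. -/
def UpClosedN {n : ℕ} (r : Set (Fin n → Heap)) : Prop :=
  ∀ ⦃f g : Fin n → Heap⦄, f ∈ r → hleN f g → g ∈ r

/-- `n`-ary separating conjunction. -/
def sepN {n : ℕ} (r s : Set (Fin n → Heap)) : Set (Fin n → Heap) :=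
  { h | ∃ f g : Fin n → Heap, f ∈ r ∧ g ∈ s ∧ (∀ i, (f i).Disjoint (g i)) ∧
        h = fun i => f i ∪ g i }

/-- Componentwise upward-closed binary heap relations. -/
def UpClosed2 (r : Set (Heap × Heap)) : Prop :=
  ∀ ⦃f g : Heap × Heap⦄, f ∈ r → hle f.1 g.1 → hle f.2 g.2 → g ∈ r

/-- Binary separating conjunction. -/
def sep2 (r s : Set (Heap × Heap)) : Set (Heap × Heap) :=
  { h | ∃ f g : Heap × Heap, f ∈ r ∧ g ∈ s ∧ f.1.Disjoint g.1 ∧ f.2.Disjoint g.2 ∧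
        h = (f.1 ∪ g.1, f.2 ∪ g.2) }

/-- Componentwise upward closure of a binary heap relation. -/
def up2 (r : Set (Heap × Heap)) : Set (Heap × Heap) :=
  { h | ∃ f ∈ r, hle f.1 h.1 ∧ hle f.2 h.2 }

/-- The binary interpretation `Δ₂`. -/
def Delta2 (p : Set Heap) : Set (Heap × Heap) :=
  { h | ∃ f ∈ p, hle f h.1 ∧ hle f h.2 }


lemma lookup_list_foldl_erase (x : ℕ+) (l : List (Sigma fun _ : ℕ+ => ℤ)) (h : Heap) :
    (l.foldl (fun s p => s.erase p.1) h).lookup x =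
      if x ∈ l.map Sigma.fst then none else h.lookup x := by
  induction l generalizing h with
  | nil => simp
  | cons p l ih =>
      simp only [List.foldl_cons, ih, List.map_cons, List.mem_cons]
      by_cases hx : x = p.1
      · subst hx
        simp [Finmap.lookup_erase]
      · by_cases hm : x ∈ l.map Sigma.fst <;> simp [hx, hm, Finmap.lookup_erase_ne hx]

lemma lookup_sdiff (h h2 : Heap) (x : ℕ+) :
    (h \ h2).lookup x = if x ∈ h2 then none else h.lookup x := by
  induction h2 using Finmap.induction_on with
  | H a =>
      show (a.entries.foldl (fun s p => s.erase p.1) h).lookup x = _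
      rw [lookup_list_foldl_erase]
      congr 1

theorem hle_refl (f : Heap) : hle f f := fun _ _ hv => hv

theorem hle_trans {f g k : Heap} (h1 : hle f g) (h2 : hle g k) : hle f k :=
  fun x v hv => h2 x v (h1 x v hv)

lemma sdiff_disjoint' (h h2 : Heap) : h2.Disjoint (h \ h2) := by
  intro x hx hx'
  rw [Finmap.mem_iff] at hx'
  obtain ⟨v, hv⟩ := hx'
  rw [lookup_sdiff, if_pos hx] at hv
  cases hv

lemma union_sdiff_eq (h h2 : Heap) (hh : hle h2 h) : h2 ∪ (h \ h2) = h := by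
  apply Finmap.ext_lookup
  intro x
  by_cases hx : x ∈ h2
  · rw [Finmap.lookup_union_left hx]
    obtain ⟨v, hv⟩ := Finmap.mem_iff.mp hx
    rw [hv, hh x v hv]
  · rw [Finmap.lookup_union_right hx, lookup_sdiff, if_neg hx]

theorem balloon_lift_unary_consequence
    (P1 P2 Q1 Q2 : Set Heap)
    (hP1 : UpClosed P1) (hP2 : UpClosed P2) (hQ1 : UpClosed Q1) (hQ2 : UpClosed Q2)
    (hvalid : ∀ ρa ρb : Set Heap, UpClosed ρa → UpClosed ρb →
      sep P1 ρa ∩ sep (sep P2 ρa) ρb ⊆ sep (sep Q1 ρa) ρb ∪ Q2)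
    (h h1 h2 : Heap) (hh1 : hle h1 h) (hh2 : hle h2 h)
    (hm1 : h1 ∈ P1) (hm2 : h2 ∈ P2) :
    h2 ∈ Q1 ∨ h ∈ Q2 := by
  classical
  set g : Heap := h \ h2 with hg
  set ρb : Set Heap := { b | hle g b } with hρb
  have hupa : UpClosed (Set.univ : Set Heap) := fun _ _ _ _ => Set.mem_univ _
  have hupb : UpClosed ρb := fun f k hf hfk => hle_trans hf hfk
  have hmem : h ∈ sep P1 Set.univ ∩ sep (sep P2 Set.univ) ρb := by
    constructor
    · exact ⟨h1, h \ h1, hm1, Set.mem_univ _, sdiff_disjoint' h h1,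
        (union_sdiff_eq h h1 hh1).symm⟩
    · refine ⟨h2, g, ⟨h2, ∅, hm2, Set.mem_univ _, Finmap.Disjoint.symm _ _ (Finmap.disjoint_empty h2),
        by simp [Finmap.union_empty]⟩,
        hle_refl g, sdiff_disjoint' h h2, (union_sdiff_eq h h2 hh2).symm⟩
  rcases hvalid Set.univ ρb hupa hupb hmem with hL | hR
  · left
    obtain ⟨fq, b, ⟨q, a', hq, _, _, hfq⟩, hb, hdisj, heq⟩ := hL
    refine hQ1 hq ?_
    intro x v hv
    have hxq : x ∈ q := Finmap.mem_of_lookup_eq_some hv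
    have hfqv : fq.lookup x = some v := by
      rw [hfq]; rw [Finmap.lookup_union_left hxq]; exact hv
    have hxfq : x ∈ fq := Finmap.mem_of_lookup_eq_some hfqv
    have hhv : h.lookup x = some v := by
      rw [heq, Finmap.lookup_union_left hxfq]; exact hfqv
    have hxb : x ∉ b := fun hxb => hdisj x hxfq hxb
    by_cases hx2 : x ∈ h2
    · obtain ⟨w, hw⟩ := Finmap.mem_iff.mp hx2
      have := hh2 x w hw
      rw [hhv] at this
      rw [hw, Option.some_inj.mp this]
    · exfalso
      apply hxb
      apply Finmap.mem_of_lookup_eq_some (b := v)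
      apply hb x v
      rw [hg, lookup_sdiff, if_neg hx2]
      exact hhv
  · right; exact hR
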